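/- Let a > 0, b ≥ 0, and let w : [0,∞) → ℝ be twice continuously differentiable with w(0) = 1, and suppose w''(t) + a·w(t) ≤ b for all t ≥ 0. If 2b ≤ a and w'(0) ≤ 0, then there exists t ∈ [0, π/√a] with w(t) ≤ 0. -/

import Mathlib

theorem stmt1 (a b : ℝ) (ha : 0 < a) (hb : 0 ≤ b) (w : ℝ → ℝ)
    (hw : ContDiff ℝ 2 w) (hw0 : w 0 = 1)
    (hineq : ∀ t ≥ (0:ℝ), deriv (deriv w) t + a * w t ≤ b)
    (hba : 2 * b ≤ a) (hw'0 : deriv w 0 ≤ 0) :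
    ∃ t ∈ Set.Icc (0:ℝ) (Real.pi / Real.sqrt a), w t ≤ 0 := by
  set s := Real.sqrt a with hs_def
  have hs : 0 < s := Real.sqrt_pos.mpr ha
  have hsa : s * s = a := Real.mul_self_sqrt ha.le
  have hwd : Differentiable ℝ w := hw.differentiable (by norm_num)
  have hw1 : ContDiff ℝ 1 (deriv w) :=
    (contDiff_succ_iff_deriv.mp (show ContDiff ℝ (1 + 1) w by exact_mod_cast hw)).2.2
  have hw'd : Differentiable ℝ (deriv w) := hw1.differentiable (by norm_num)
  set F : ℝ → ℝ := fun t =>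
    deriv w t * Real.sin (s * t) - w t * (s * Real.cos (s * t)) + b / s * Real.cos (s * t)
    with hF_def
  have hF : ∀ t : ℝ,
      HasDerivAt F ((deriv (deriv w) t + a * w t - b) * Real.sin (s * t)) t := by
    intro t
    have h1 : HasDerivAt w (deriv w t) t := (hwd t).hasDerivAt
    have h2 : HasDerivAt (deriv w) (deriv (deriv w) t) t := (hw'd t).hasDerivAt
    have hlin : HasDerivAt (fun x : ℝ => s * x) s t := by
      simpa using (hasDerivAt_id t).const_mul s
    have hsin : HasDerivAt (fun x => Real.sin (s * x)) (Real.cos (s * t) * s) t :=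
      (Real.hasDerivAt_sin (s * t)).comp t hlin
    have hcos : HasDerivAt (fun x => Real.cos (s * x)) (-Real.sin (s * t) * s) t :=
      (Real.hasDerivAt_cos (s * t)).comp t hlin
    have h := ((h2.mul hsin).sub (h1.mul (hcos.const_mul s))).add (hcos.const_mul (b / s))
    convert h using 1
    · rfl
    · rfl
    · rfl
    have hbs : b / s * s = b := div_mul_cancel₀ b hs.ne'
    rw [← hsa]
    field_simp
    ring
  have hFc : Continuous F := by
    have := hw1.continuous
    fun_prop
  have hT : 0 < Real.pi / s := div_pos Real.pi_pos hs
  have hanti : AntitoneOn F (Set.Icc 0 (Real.pi / s)) := by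
    apply antitoneOn_of_deriv_nonpos (convex_Icc _ _) hFc.continuousOn
    · intro x hx
      exact (hF x).differentiableAt.differentiableWithinAt
    · intro x hx
      rw [interior_Icc] at hx
      rw [(hF x).deriv]
      have hx0 : (0:ℝ) ≤ x := hx.1.le
      have hsx : s * x ≤ Real.pi := by
        have := hx.2.le
        calc s * x ≤ s * (Real.pi / s) := by nlinarith
        _ = Real.pi := mul_div_cancel₀ _ hs.ne'
      have hsin0 : 0 ≤ Real.sin (s * x) :=
        Real.sin_nonneg_of_nonneg_of_le_pi (by positivity) hsx
      have := hineq x hx0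
      exact mul_nonpos_of_nonpos_of_nonneg (by linarith) hsin0
  have key : F (Real.pi / s) ≤ F 0 :=
    hanti (Set.left_mem_Icc.mpr hT.le) (Set.right_mem_Icc.mpr hT.le) hT.le
  have hpi : s * (Real.pi / s) = Real.pi := mul_div_cancel₀ _ hs.ne'
  have hFT : F (Real.pi / s) = s * w (Real.pi / s) - b / s := by
    simp [hF_def, hpi, Real.sin_pi, Real.cos_pi]; ring
  have hF0 : F 0 = -s + b / s := by
    simp [hF_def, hw0]
  rw [hFT, hF0] at key
  refine ⟨Real.pi / s, Set.right_mem_Icc.mpr hT.le, ?_⟩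
  have hbs : b / s * s = b := div_mul_cancel₀ b hs.ne'
  nlinarith [key, hs, hsa]
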